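/- Let O be the real algebra with basis {e^x : x ∈ F_8} and multiplication e^x e^y = (-1)^{tr(y x^6)} e^{x+y}. Define the associator [a,b,c] = (ab)c − a(bc). Then the associator is alternating: for all a, b, c ∈ O and every permutation σ of {1,2,3}, [a_{σ(1)}, a_{σ(2)}, a_{σ(3)}] = sign(σ)[a_1, a_2, a_3]. In particular [a,a,b] = [a,b,a] = [b,a,a] = 0, so O is an alternative algebra. -/
import Mathlib


open scoped Classical
noncomputable section

abbrev F8 := GaloisField 2 3

instance : Fintype F8 := Fintype.ofFinite F8

def tr (x : F8) : F8 := x + x ^ 2 + x ^ 4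

/-- The sign `(-1)^{φ(x,y)}` where `φ(x,y) = tr(y x⁶)`. -/
def sgn (x y : F8) : ℝ := if tr (y * x ^ 6) = 0 then 1 else -1

/-- Multiplication of the twisted group algebra `ℝ_σ[F₈]`, on coordinates:
octonions are functions `F8 → ℝ`, and `e^x e^y = (-1)^{tr(y x⁶)} e^{x+y}`. -/
def omul (a b : F8 → ℝ) : F8 → ℝ := fun z => ∑ x : F8, sgn x (z + x) * a x * b (z + x)

/-- The basis element `e^x`. -/
def e (x : F8) : F8 → ℝ := fun w => if w = x then 1 else 0

/-- Octonion conjugation: `a* = Re(a) - Im(a)`. -/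
def conj (a : F8 → ℝ) : F8 → ℝ := fun w => if w = 0 then a 0 else - a w

/-- The norm `N(a) = Σ aₓ²`. -/
def N (a : F8 → ℝ) : ℝ := ∑ x : F8, (a x) ^ 2

/-- The associator `[a,b,c] = (ab)c - a(bc)`. -/
def assoc (a b c : F8 → ℝ) : F8 → ℝ := omul (omul a b) c - omul a (omul b c)


lemma two_eq_zero : (2:F8) = 0 := by exact_mod_cast CharP.cast_eq_zero F8 2

lemma pow8 (x : F8) : x ^ 8 = x := by
  have h : Fintype.card F8 = 8 := by
    have h := GaloisField.card 2 3 (by norm_num)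
    rw [Nat.card_eq_fintype_card] at h; exact h.trans rfl
  have := FiniteField.pow_card x
  rwa [h] at this

lemma pow7 {x : F8} (hx : x ≠ 0) : x ^ 7 = 1 := by
  have h : x ^ 7 * x = 1 * x := by rw [one_mul]; linear_combination pow8 x
  exact mul_right_cancel₀ hx h

lemma tr_add (x y : F8) : tr (x + y) = tr x + tr y := by
  simp only [tr]
  linear_combination (x*y + 2*x^3*y + 3*x^2*y^2 + 2*x*y^3) * two_eq_zero

lemma tr_sq (x : F8) : tr (x ^ 2) = tr x := by
  simp only [tr]; linear_combination pow8 x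

lemma tr_01 (x : F8) : tr x = 0 ∨ tr x = 1 := by
  have h : tr x * tr x = tr x := by
    simp only [tr]
    linear_combination pow8 x + (x^3 + x^5 + x^6) * two_eq_zero
  have h2 : tr x * (tr x - 1) = 0 := by ring_nf; linear_combination h
  rcases mul_eq_zero.mp h2 with h3 | h3
  · exact Or.inl h3
  · exact Or.inr (by linear_combination h3)

def chi (t : F8) : ℝ := if tr t = 0 then 1 else -1

lemma chi_add (s t : F8) : chi (s + t) = chi s * chi t := by
  have h11 : (1:F8) + 1 = 0 := by linear_combination two_eq_zero
  rcases tr_01 s with hs | hs <;> rcases tr_01 t with ht | ht <;>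
    simp [chi, tr_add, hs, ht, h11, one_ne_zero]

lemma chi_sq (t : F8) : chi t * chi t = 1 := by
  unfold chi; split <;> norm_num

lemma sgn_eq (x y : F8) : sgn x y = chi (y * x ^ 6) := rfl

lemma chi_congr {s t : F8} (h : s = t) : chi s = chi t := by rw [h]

-- key trace lemma: tr(v u^6 + u v^6) = 1 for u,v,u+v nonzero
lemma trc {u v : F8} (hu : u ≠ 0) (hv : v ≠ 0) (huv : u + v ≠ 0) :
    tr (v * u ^ 6 + u * v ^ 6) = 1 := by
  have hu7 := pow7 hu
  have hv7 := pow7 hv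
  have hT : tr (v * u ^ 6 + u * v ^ 6) =
      u^6*v + u^5*v^2 + u^4*v^3 + u^3*v^4 + u^2*v^5 + u*v^6 := by
    simp only [tr]
    linear_combination (v^2*u^5 + v^4*u^3*(u^14+u^7+1)) * hu7 +
      (u^2*v^5 + u^4*v^3*(v^14+v^7+1)) * hv7 +
      (u^7*v^7 + 2*u^19*v^9 + 2*u^9*v^19 + 3*u^14*v^14) * two_eq_zero
  have hS : (u+v) * (u^6*v + u^5*v^2 + u^4*v^3 + u^3*v^4 + u^2*v^5 + u*v^6) = (u+v) * 1 := by
    linear_combination v*hu7 + u*hv7 + (u^6*v^2+u^5*v^3+u^4*v^4+u^3*v^5+u^2*v^6) * two_eq_zero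
  rw [hT]
  exact mul_left_cancel₀ huv hS

def Kf (u v w : F8) : ℝ := sgn u v * sgn (u+v) w - sgn u (v+w) * sgn v w

lemma Kf_eq (u v w : F8) :
    Kf u v w = chi (v*u^6 + w*u^6 + w*v^6) * (chi (u^4*v^2*w + u^2*v^4*w) - 1) := by
  have h1 : sgn u v * sgn (u+v) w
      = chi (v*u^6 + w*u^6 + w*v^6) * chi (u^4*v^2*w + u^2*v^4*w) := by
    rw [sgn_eq, sgn_eq, ← chi_add, ← chi_add]
    apply chi_congr
    linear_combination (w*(3*u^5*v + 7*u^4*v^2 + 10*u^3*v^3 + 7*u^2*v^4 + 3*u*v^5)) * two_eq_zero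
  have h2 : sgn u (v+w) * sgn v w = chi (v*u^6 + w*u^6 + w*v^6) := by
    rw [sgn_eq, sgn_eq, ← chi_add]
    apply chi_congr
    ring
  unfold Kf
  rw [h1, h2]
  ring

lemma factors_ne_zero {u v w : F8} (h : tr (u^4*v^2*w + u^2*v^4*w) ≠ 0) :
    u ≠ 0 ∧ v ≠ 0 ∧ u + v ≠ 0 := by
  have hD : u^4*v^2*w + u^2*v^4*w = (u*v*(u+v))^2 * w := by
    linear_combination (-(u^3*v^3*w)) * two_eq_zero
  have hne : u^4*v^2*w + u^2*v^4*w ≠ 0 := by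
    intro h0; rw [h0] at h; exact h (by simp [tr])
  rw [hD] at hne
  have h1 : u*v*(u+v) ≠ 0 := fun h0 => hne (by rw [h0]; ring)
  exact ⟨fun h0 => h1 (by rw [h0]; ring), fun h0 => h1 (by rw [h0]; ring),
    fun h0 => h1 (by rw [h0]; ring)⟩

lemma chi_of_tr_ne {t : F8} (h : tr t ≠ 0) : chi t = -1 := by simp [chi, h]

lemma L12 (u v w : F8) : Kf u v w + Kf v u w = 0 := by
  rw [Kf_eq, Kf_eq]
  have hDD : chi (v^4*u^2*w + v^2*u^4*w) = chi (u^4*v^2*w + u^2*v^4*w) := by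
    apply chi_congr; ring
  rw [hDD]
  by_cases hD : tr (u^4*v^2*w + u^2*v^4*w) = 0
  · have : chi (u^4*v^2*w + u^2*v^4*w) = 1 := by simp [chi, hD]
    rw [this]; ring
  · obtain ⟨hu, hv, huv⟩ := factors_ne_zero hD
    have hc : chi (v*u^6 + u*v^6) = -1 := by
      apply chi_of_tr_ne; rw [trc hu hv huv]; exact one_ne_zero
    have hB : chi (v*u^6 + w*u^6 + w*v^6)
        = chi (u*v^6 + w*v^6 + w*u^6) * chi (v*u^6 + u*v^6) := by
      rw [← chi_add]; apply chi_congr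
      linear_combination (-(u*v^6)) * two_eq_zero
    rw [hB, hc]
    ring

lemma tr_arg {s t : F8} (h : s = t) : tr s = tr t := by rw [h]

lemma trD_swap (u v w : F8) :
    tr (u^4*v^2*w + u^2*v^4*w) = tr (u^4*w^2*v + u^2*w^4*v) := by
  have e1 : tr (u^4*v^2*w) = tr (u^2*v*w^4) := by
    rw [show u^4*v^2*w = (u^2*v*w^4)^2 by linear_combination (-(u^4*v^2))*(pow8 w), tr_sq]
  have e2 : tr (u^2*v^4*w) = tr (u^4*v*w^2) := by
    rw [show u^4*v*w^2 = (u^2*v^4*w)^2 by linear_combination (-(u^4*w^2))*(pow8 v)] at *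
    rw [tr_sq]
  rw [tr_add, tr_add, e1, e2]
  rw [show u^4*w^2*v = u^4*v*w^2 by ring, show u^2*w^4*v = u^2*v*w^4 by ring]
  ring

lemma trD_diag (u v : F8) : tr (u^4*v^2*v + u^2*v^4*v) = 0 := by
  have e1 : tr (u^4*v^2*v) = tr (u^2*v^5) := by
    rw [show u^4*v^2*v = (u^2*v^5)^2 by linear_combination (-(u^4*v^2))*(pow8 v), tr_sq]
  rw [tr_add, e1, show u^2*v^4*v = u^2*v^5 by ring]
  linear_combination (tr (u^2*v^5)) * two_eq_zero

lemma L23 (u v w : F8) : Kf u v w + Kf u w v = 0 := by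
  rw [Kf_eq, Kf_eq]
  have hDD : chi (u^4*w^2*v + u^2*w^4*v) = chi (u^4*v^2*w + u^2*v^4*w) := by
    unfold chi; rw [trD_swap u v w]
  rw [hDD]
  by_cases hD : tr (u^4*v^2*w + u^2*v^4*w) = 0
  · have : chi (u^4*v^2*w + u^2*v^4*w) = 1 := by simp [chi, hD]
    rw [this]; ring
  · have hvw : v ≠ w := by
      intro h; rw [h] at hD; exact hD (trD_diag u w)
    have hv : v ≠ 0 := (factors_ne_zero hD).2.1
    have hw : w ≠ 0 := by
      have hD' : tr (u^4*w^2*v + u^2*w^4*v) ≠ 0 := by rwa [trD_swap u v w] at hD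
      exact (factors_ne_zero hD').2.1
    have hvw' : v + w ≠ 0 := by
      intro h0
      apply hvw
      have : v + w + w = 0 + w := by rw [h0]
      calc v = v + w + w := by linear_combination (-w)*two_eq_zero
        _ = w := by rw [h0]; ring
    have hc : chi (w*v^6 + v*w^6) = -1 := by
      apply chi_of_tr_ne; rw [trc hv hw hvw']; exact one_ne_zero
    have hB : chi (v*u^6 + w*u^6 + w*v^6)
        = chi (w*u^6 + v*u^6 + v*w^6) * chi (w*v^6 + v*w^6) := by
      rw [← chi_add]; apply chi_congr
      linear_combination (-(v*w^6)) * two_eq_zero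
    rw [hB, hc]
    ring

lemma cancel_left (x y : F8) : x + (x + y) = y := by
  linear_combination x * two_eq_zero

lemma assoc_apply_eq (a b c : F8 → ℝ) (z : F8) :
    assoc a b c z = ∑ u : F8, ∑ v : F8, Kf u v (z + u + v) * (a u * b v * c (z + u + v)) := by
  have h1 : omul (omul a b) c z
      = ∑ u : F8, ∑ v : F8, (sgn u v * sgn (u+v) (z+u+v)) * (a u * b v * c (z+u+v)) := by
    unfold omul
    simp only [Finset.sum_mul, Finset.mul_sum]
    rw [Finset.sum_comm]
    apply Finset.sum_congr rfl
    intro u _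
    rw [← Equiv.sum_comp (Equiv.addLeft u) (fun x => sgn x (z + x) * (sgn u (x + u) * a u * b (x + u)) * c (z + x))]
    apply Finset.sum_congr rfl
    intro v _
    simp only [Equiv.coe_addLeft]
    rw [show u + v + u = v by linear_combination u * two_eq_zero,
      show z + (u + v) = z + u + v by ring]
    ring
  have h2 : omul a (omul b c) z
      = ∑ u : F8, ∑ v : F8, (sgn u (v + (z+u+v)) * sgn v (z+u+v)) * (a u * b v * c (z+u+v)) := by
    unfold omul
    simp only [Finset.mul_sum]
    apply Finset.sum_congr rfl
    intro u _
    apply Finset.sum_congr rfl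
    intro v _
    rw [show v + (z + u + v) = z + u by linear_combination v * two_eq_zero]
    ring
  have h3 : assoc a b c z = omul (omul a b) c z - omul a (omul b c) z := rfl
  rw [h3, h1, h2, ← Finset.sum_sub_distrib]
  apply Finset.sum_congr rfl
  intro u _
  rw [← Finset.sum_sub_distrib]
  apply Finset.sum_congr rfl
  intro v _
  unfold Kf
  ring

lemma addA (x y z : F8 → ℝ) : assoc x y z + assoc y x z = 0 := by
  funext p
  show assoc x y z p + assoc y x z p = 0
  rw [assoc_apply_eq, assoc_apply_eq]
  have key : (∑ u : F8, ∑ v : F8, Kf u v (p + u + v) * (y u * x v * z (p + u + v)))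
      = ∑ u : F8, ∑ v : F8, Kf v u (p + v + u) * (y v * x u * z (p + v + u)) :=
    Finset.sum_comm
  rw [key, ← Finset.sum_add_distrib]
  rw [show (0:ℝ) = ∑ u : F8, 0 by simp]
  apply Finset.sum_congr rfl
  intro u _
  rw [← Finset.sum_add_distrib]
  rw [show (0:ℝ) = ∑ v : F8, 0 by simp]
  apply Finset.sum_congr rfl
  intro v _
  rw [show p + v + u = p + u + v by ring]
  linear_combination (x u * y v * z (p + u + v)) * (L12 u v (p + u + v))

lemma addC (x y z : F8 → ℝ) : assoc x y z + assoc x z y = 0 := by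
  funext p
  show assoc x y z p + assoc x z y p = 0
  rw [assoc_apply_eq, assoc_apply_eq]
  have key : (∑ u : F8, ∑ v : F8, Kf u v (p + u + v) * (x u * z v * y (p + u + v)))
      = ∑ u : F8, ∑ v : F8, Kf u (p + u + v) v * (x u * z (p + u + v) * y v) := by
    apply Finset.sum_congr rfl
    intro u _
    rw [← Equiv.sum_comp (Equiv.addLeft (p + u))
      (fun v => Kf u v (p + u + v) * (x u * z v * y (p + u + v)))]
    apply Finset.sum_congr rfl
    intro v _
    simp only [Equiv.coe_addLeft]
    rw [show p + u + (p + u + v) = v from cancel_left _ _]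
  rw [key, ← Finset.sum_add_distrib]
  rw [show (0:ℝ) = ∑ u : F8, 0 by simp]
  apply Finset.sum_congr rfl
  intro u _
  rw [← Finset.sum_add_distrib]
  rw [show (0:ℝ) = ∑ v : F8, 0 by simp]
  apply Finset.sum_congr rfl
  intro v _
  linear_combination (x u * y v * z (p + u + v)) * (L23 u v (p + u + v))

lemma A12 (x y z : F8 → ℝ) : assoc y x z = - assoc x y z :=
  eq_neg_of_add_eq_zero_left (add_comm (assoc x y z) (assoc y x z) ▸ addA x y z)

lemma A23 (x y z : F8 → ℝ) : assoc x z y = - assoc x y z :=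
  eq_neg_of_add_eq_zero_left (add_comm (assoc x y z) (assoc x z y) ▸ addC x y z)

lemma zero_aab (a b : F8 → ℝ) : assoc a a b = 0 := by
  have h := addA a a b
  have h2 : assoc a a b + assoc a a b = 0 := h
  funext p
  have := congrFun h2 p
  simp only [Pi.add_apply, Pi.zero_apply] at this ⊢
  linarith

lemma zero_baa (b a : F8 → ℝ) : assoc b a a = 0 := by
  have h : assoc b a a + assoc b a a = 0 := addC b a a
  funext p
  have := congrFun h p
  simp only [Pi.add_apply, Pi.zero_apply] at this ⊢
  linarith

lemma zero_aba (a b : F8 → ℝ) : assoc a b a = 0 := by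
  rw [A12 b a a, zero_baa b a, neg_zero]
open Equiv

lemma A13 (x y z : F8 → ℝ) : assoc z y x = - assoc x y z := by
  rw [A12 y z x, A23 y x z, A12 x y z]; simp

theorem associator_alternating :
    (∀ (a : Fin 3 → (F8 → ℝ)) (σ : Equiv.Perm (Fin 3)),
      assoc (a (σ 0)) (a (σ 1)) (a (σ 2)) =
        ((Equiv.Perm.sign σ : ℤ)) • assoc (a 0) (a 1) (a 2)) ∧
    (∀ a b : F8 → ℝ, assoc a a b = 0 ∧ assoc a b a = 0 ∧ assoc b a a = 0) := by
  constructor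
  · intro a σ
    have hall : ∀ τ : Perm (Fin 3), τ = 1 ∨ τ = (swap 0 1 : Perm (Fin 3)) ∨
        τ = (swap 0 2 : Perm (Fin 3)) ∨ τ = (swap 1 2 : Perm (Fin 3)) ∨
        τ = (swap 0 1 * swap 1 2 : Perm (Fin 3)) ∨ τ = (swap 1 2 * swap 0 1 : Perm (Fin 3)) := by
      decide
    have hσ : σ = 1 ∨ σ = (swap 0 1 : Perm (Fin 3)) ∨ σ = (swap 0 2 : Perm (Fin 3)) ∨ σ = (swap 1 2 : Perm (Fin 3)) ∨
        σ = (swap 0 1 * swap 1 2 : Perm (Fin 3)) ∨ σ = (swap 1 2 * swap 0 1 : Perm (Fin 3)) := hall σ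
    have hs01 : Equiv.Perm.sign (swap (0:Fin 3) 1) = -1 := Equiv.Perm.sign_swap (by decide)
    have hs02 : Equiv.Perm.sign (swap (0:Fin 3) 2) = -1 := Equiv.Perm.sign_swap (by decide)
    have hs12 : Equiv.Perm.sign (swap (1:Fin 3) 2) = -1 := Equiv.Perm.sign_swap (by decide)
    rcases hσ with h | h | h | h | h | h <;> subst h
    · simp only [Equiv.Perm.one_apply, map_one]
      norm_num
    · rw [show (swap (0:Fin 3) 1) 0 = 1 from by decide,
        show (swap (0:Fin 3) 1) 1 = 0 from by decide,
        show (swap (0:Fin 3) 1) 2 = 2 from by decide, hs01, A12]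
      norm_num
    · rw [show (swap (0:Fin 3) 2) 0 = 2 from by decide,
        show (swap (0:Fin 3) 2) 1 = 1 from by decide,
        show (swap (0:Fin 3) 2) 2 = 0 from by decide, hs02, A13]
      norm_num
    · rw [show (swap (1:Fin 3) 2) 0 = 0 from by decide,
        show (swap (1:Fin 3) 2) 1 = 2 from by decide,
        show (swap (1:Fin 3) 2) 2 = 1 from by decide, hs12, A23]
      norm_num
    · rw [show ((swap 0 1 * swap 1 2 : Perm (Fin 3))) 0 = 1 from by decide,
        show ((swap 0 1 * swap 1 2 : Perm (Fin 3))) 1 = 2 from by decide,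
        show ((swap 0 1 * swap 1 2 : Perm (Fin 3))) 2 = 0 from by decide,
        map_mul, hs01, hs12]
      rw [A13 (a 0) (a 2) (a 1), A23 (a 0) (a 1) (a 2)]
      norm_num
    · rw [show ((swap 1 2 * swap 0 1 : Perm (Fin 3))) 0 = 2 from by decide,
        show ((swap 1 2 * swap 0 1 : Perm (Fin 3))) 1 = 0 from by decide,
        show ((swap 1 2 * swap 0 1 : Perm (Fin 3))) 2 = 1 from by decide,
        map_mul, hs01, hs12]
      rw [A12 (a 0) (a 2) (a 1), A23 (a 0) (a 1) (a 2)]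
      norm_num
  · intro a b
    exact ⟨zero_aab a b, zero_aba a b, zero_baa b a⟩
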